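/- The approximating distribution p̂ is a probability mass function on X × W whose marginals agree with those of p: for every x ∈ X, ∑_w p̂(x,w) = p₁(x); for every w ∈ W, ∑_x p̂(x,w) = p₂(w); and consequently ∑_{x,w} p̂(x,w) = 1. -/

import Mathlib

open scoped BigOperators

noncomputable section

/-- Kullback–Leibler divergence `D(g‖h)` between nonnegative functions on a finite type,
`D(g‖h) = ∑_{t : g t > 0} g t * log (g t / h t)`, with the convention `D(g‖h) = ⊤`
whenever `g t > 0 = h t` for some `t`. -/
def KLdiv {T : Type*} [Fintype T] (g h : T → ℝ) : EReal :=
  if ∃ t, 0 < g t ∧ h t = 0 then ⊤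
  else ((∑ t ∈ Finset.univ.filter (fun t => 0 < g t),
      g t * Real.log (g t / h t) : ℝ) : EReal)

/-- Row marginal `p₁(x) = ∑_w p(x,w)`. -/
def marg₁ {A B : Type*} [Fintype B] (p : A × B → ℝ) (x : A) : ℝ := ∑ w, p (x, w)

/-- Column marginal `p₂(w) = ∑_x p(x,w)`. -/
def marg₂ {A B : Type*} [Fintype A] (p : A × B → ℝ) (w : B) : ℝ := ∑ x, p (x, w)

/-- Co-clustered distribution `p*(x*,w*) = ∑_{x : C_X x = x*} ∑_{w : C_W w = w*} p(x,w)`. -/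
def coclust {A B As Bs : Type*} [Fintype A] [Fintype B] [DecidableEq As] [DecidableEq Bs]
    (p : A × B → ℝ) (CX : A → As) (CW : B → Bs) : As × Bs → ℝ :=
  fun c => ∑ x ∈ Finset.univ.filter (fun x => CX x = c.1),
             ∑ w ∈ Finset.univ.filter (fun w => CW w = c.2), p (x, w)

/-- Approximating distribution
`p̂(x,w) = p*(C_X x, C_W w) · p₁(x) · p₂(w) / (p₁*(C_X x) · p₂*(C_W w))`. -/
def approx {A B As Bs : Type*} [Fintype A] [Fintype B] [Fintype As] [Fintype Bs]
    [DecidableEq As] [DecidableEq Bs]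
    (p : A × B → ℝ) (CX : A → As) (CW : B → Bs) : A × B → ℝ :=
  fun c =>
    coclust p CX CW (CX c.1, CW c.2) * marg₁ p c.1 * marg₂ p c.2 /
      (marg₁ (coclust p CX CW) (CX c.1) * marg₂ (coclust p CX CW) (CW c.2))

/-- Conditional distribution `p(w|x) = p(x,w)/p₁(x)` on `B`. -/
def condRow {A B : Type*} [Fintype B] (p : A × B → ℝ) (x : A) : B → ℝ :=
  fun w => p (x, w) / marg₁ p x

/-- Conditional distribution `p(x|w) = p(x,w)/p₂(w)` on `A`. -/
def condCol {A B : Type*} [Fintype A] (p : A × B → ℝ) (w : B) : A → ℝ :=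
  fun x => p (x, w) / marg₂ p w

/-- Conditional approximating distribution
`p̂(w|x*) = p*(x*, C_W w) · p₂(w) / (p₁*(x*) · p₂*(C_W w))` on `B`. -/
def approxCondRow {A B As Bs : Type*} [Fintype A] [Fintype B] [Fintype As] [Fintype Bs]
    [DecidableEq As] [DecidableEq Bs]
    (p : A × B → ℝ) (CX : A → As) (CW : B → Bs) (xs : As) : B → ℝ :=
  fun w =>
    coclust p CX CW (xs, CW w) * marg₂ p w /
      (marg₁ (coclust p CX CW) xs * marg₂ (coclust p CX CW) (CW w))

/-- Conditional approximating distribution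
`p̂(x|w*) = p*(C_X x, w*) · p₁(x) / (p₂*(w*) · p₁*(C_X x))` on `A`. -/
def approxCondCol {A B As Bs : Type*} [Fintype A] [Fintype B] [Fintype As] [Fintype Bs]
    [DecidableEq As] [DecidableEq Bs]
    (p : A × B → ℝ) (CX : A → As) (CW : B → Bs) (ws : Bs) : A → ℝ :=
  fun x =>
    coclust p CX CW (CX x, ws) * marg₁ p x /
      (marg₂ (coclust p CX CW) ws * marg₁ (coclust p CX CW) (CX x))

/-- Mutual information `I(p) = ∑_{x,w} p(x,w) · log (p(x,w)/(p₁(x)·p₂(w)))`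
(summing over all pairs; used for the strictly positive original distribution). -/
def mutualInfoFull {A B : Type*} [Fintype A] [Fintype B] (p : A × B → ℝ) : ℝ :=
  ∑ x, ∑ w, p (x, w) * Real.log (p (x, w) / (marg₁ p x * marg₂ p w))

/-- Mutual information `I(p*) = ∑_{(x*,w*) : p*(x*,w*) > 0} p*(x*,w*) ·
log (p*(x*,w*)/(p₁*(x*)·p₂*(w*)))` (summing only over positive entries). -/
def mutualInfoPos {A B : Type*} [Fintype A] [Fintype B] (p : A × B → ℝ) : ℝ :=
  ∑ c ∈ Finset.univ.filter (fun c : A × B => 0 < p c),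
    p c * Real.log (p c / (marg₁ p c.1 * marg₂ p c.2))

/-- The co-clustering objective `ℓ_A(C_X, C_W) = I(p) − I(p*)`. -/
def lossA {A B As Bs : Type*} [Fintype A] [Fintype B] [Fintype As] [Fintype Bs]
    [DecidableEq As] [DecidableEq Bs]
    (p : A × B → ℝ) (CX : A → As) (CW : B → Bs) : ℝ :=
  mutualInfoFull p - mutualInfoPos (coclust p CX CW)

/-- The elastic coupled co-clustering objective
`ℓ_T(C_Y, C_Z) = I(q) − I(q*) + α·D(q₁*‖π) + β·D(q₂*‖ρ)`. -/
def lossT {A B As Bs : Type*} [Fintype A] [Fintype B] [Fintype As] [Fintype Bs]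
    [DecidableEq As] [DecidableEq Bs]
    (q : A × B → ℝ) (CY : A → As) (CZ : B → Bs) (π : As → ℝ) (ρ : Bs → ℝ)
    (α β : ℝ) : EReal :=
  ((mutualInfoFull q - mutualInfoPos (coclust q CY CZ) : ℝ) : EReal)
    + (α : EReal) * KLdiv (marg₁ (coclust q CY CZ)) π
    + (β : EReal) * KLdiv (marg₂ (coclust q CY CZ)) ρ

end


section helpers
variable {X W Xs Ws : Type*} [Fintype X] [Fintype W] [Fintype Xs] [Fintype Ws]
  [DecidableEq Xs] [DecidableEq Ws]

lemma coclust_nonneg' (p : X × W → ℝ) (hpos : ∀ c, 0 ≤ p c) (CX : X → Xs) (CW : W → Ws)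
    (c : Xs × Ws) : 0 ≤ coclust p CX CW c :=
  Finset.sum_nonneg fun _ _ => Finset.sum_nonneg fun _ _ => hpos _

lemma marg1_coclust' (p : X × W → ℝ) (CX : X → Xs) (CW : W → Ws) (xs : Xs) :
    marg₁ (coclust p CX CW) xs = ∑ x ∈ Finset.univ.filter (fun x => CX x = xs), marg₁ p x := by
  unfold marg₁ coclust
  rw [show (∑ ws : Ws, ∑ x ∈ Finset.univ.filter (fun x => CX x = xs),
      ∑ w ∈ Finset.univ.filter (fun w => CW w = ws), p (x, w))
    = ∑ x ∈ Finset.univ.filter (fun x => CX x = xs), ∑ ws : Ws,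
      ∑ w ∈ Finset.univ.filter (fun w => CW w = ws), p (x, w) from Finset.sum_comm]
  exact Finset.sum_congr rfl fun x _ => Finset.sum_fiberwise Finset.univ CW (fun w => p (x, w))

lemma marg2_coclust' (p : X × W → ℝ) (CX : X → Xs) (CW : W → Ws) (ws : Ws) :
    marg₂ (coclust p CX CW) ws = ∑ w ∈ Finset.univ.filter (fun w => CW w = ws), marg₂ p w := by
  unfold marg₂ coclust
  simp only []
  rw [Finset.sum_comm]
  rw [show (∑ xs : Xs, ∑ x ∈ Finset.univ.filter (fun x => CX x = xs),
      ∑ w ∈ Finset.univ.filter (fun w => CW w = ws), p (x, w))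
    = ∑ x : X, ∑ w ∈ Finset.univ.filter (fun w => CW w = ws), p (x, w) from
      Finset.sum_fiberwise Finset.univ CX _]

end helpers

/-- The approximating distribution `p̂` is a probability mass function on `X × W`
whose marginals agree with those of `p`. -/
theorem approx_marginals {X W Xs Ws : Type*} [Fintype X] [Fintype W] [Nonempty X] [Nonempty W]
    [Fintype Xs] [Fintype Ws] [DecidableEq Xs] [DecidableEq Ws]
    (p : X × W → ℝ) (hpos : ∀ c, 0 < p c) (hsum : ∑ c, p c = 1)
    (CX : X → Xs) (CW : W → Ws) :
    (∀ x : X, ∑ w : W, approx p CX CW (x, w) = marg₁ p x) ∧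
    (∀ w : W, ∑ x : X, approx p CX CW (x, w) = marg₂ p w) ∧
    (∑ c : X × W, approx p CX CW c = 1) := by
  have hpn : ∀ c, 0 ≤ p c := fun c => (hpos c).le
  have hM1pos : ∀ x : X, 0 < marg₁ (coclust p CX CW) (CX x) := by
    intro x
    rw [marg1_coclust']
    refine Finset.sum_pos' (fun y _ => Finset.sum_nonneg fun w _ => hpn _) ⟨x, by simp, ?_⟩
    exact Finset.sum_pos (fun w _ => hpos _) Finset.univ_nonempty
  have hM2pos : ∀ w : W, 0 < marg₂ (coclust p CX CW) (CW w) := by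
    intro w
    rw [marg2_coclust']
    refine Finset.sum_pos' (fun y _ => Finset.sum_nonneg fun x _ => hpn _) ⟨w, by simp, ?_⟩
    exact Finset.sum_pos (fun x _ => hpos _) Finset.univ_nonempty
  have hrow : ∀ x : X, ∑ w : W, approx p CX CW (x, w) = marg₁ p x := by
    intro x
    have h1 : ∀ w : W, approx p CX CW (x, w) =
        (marg₁ p x / marg₁ (coclust p CX CW) (CX x)) *
          (coclust p CX CW (CX x, CW w) * marg₂ p w / marg₂ (coclust p CX CW) (CW w)) := by
      intro w
      unfold approx
      have d1 := (hM1pos x).ne'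
      have d2 := (hM2pos w).ne'
      field_simp
    rw [Finset.sum_congr rfl fun w _ => h1 w, ← Finset.mul_sum]
    have h2 : ∑ w : W,
        coclust p CX CW (CX x, CW w) * marg₂ p w / marg₂ (coclust p CX CW) (CW w)
        = marg₁ (coclust p CX CW) (CX x) := by
      rw [← Finset.sum_fiberwise Finset.univ CW
        (fun w => coclust p CX CW (CX x, CW w) * marg₂ p w / marg₂ (coclust p CX CW) (CW w))]
      unfold marg₁
      refine Finset.sum_congr rfl fun ws _ => ?_
      have h3 : ∀ w ∈ Finset.univ.filter (fun w => CW w = ws),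
          coclust p CX CW (CX x, CW w) * marg₂ p w / marg₂ (coclust p CX CW) (CW w)
          = coclust p CX CW (CX x, ws) / marg₂ (coclust p CX CW) ws * marg₂ p w := by
        intro w hw
        simp only [Finset.mem_filter] at hw
        rw [hw.2]; ring
      rw [Finset.sum_congr rfl h3, ← Finset.mul_sum, ← marg2_coclust' p CX CW ws]
      by_cases h : marg₂ (coclust p CX CW) ws = 0
      · have hle : coclust p CX CW (CX x, ws) ≤ marg₂ (coclust p CX CW) ws :=
          Finset.single_le_sum (f := fun xs => coclust p CX CW (xs, ws))
            (fun i _ => coclust_nonneg' p hpn CX CW (i, ws)) (Finset.mem_univ (CX x))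
        have hc : coclust p CX CW (CX x, ws) = 0 := by
          have := coclust_nonneg' p hpn CX CW (CX x, ws); linarith
        simp [h, hc]
      · field_simp
    rw [h2, div_mul_cancel₀ _ (hM1pos x).ne']
  have hcol : ∀ w : W, ∑ x : X, approx p CX CW (x, w) = marg₂ p w := by
    intro w
    have h1 : ∀ x : X, approx p CX CW (x, w) =
        (marg₂ p w / marg₂ (coclust p CX CW) (CW w)) *
          (coclust p CX CW (CX x, CW w) * marg₁ p x / marg₁ (coclust p CX CW) (CX x)) := by
      intro x
      unfold approx
      have d1 := (hM1pos x).ne'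
      have d2 := (hM2pos w).ne'
      field_simp
    rw [Finset.sum_congr rfl fun x _ => h1 x, ← Finset.mul_sum]
    have h2 : ∑ x : X,
        coclust p CX CW (CX x, CW w) * marg₁ p x / marg₁ (coclust p CX CW) (CX x)
        = marg₂ (coclust p CX CW) (CW w) := by
      rw [← Finset.sum_fiberwise Finset.univ CX
        (fun x => coclust p CX CW (CX x, CW w) * marg₁ p x / marg₁ (coclust p CX CW) (CX x))]
      unfold marg₂
      refine Finset.sum_congr rfl fun xs _ => ?_
      have h3 : ∀ x ∈ Finset.univ.filter (fun x => CX x = xs),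
          coclust p CX CW (CX x, CW w) * marg₁ p x / marg₁ (coclust p CX CW) (CX x)
          = coclust p CX CW (xs, CW w) / marg₁ (coclust p CX CW) xs * marg₁ p x := by
        intro x hx
        simp only [Finset.mem_filter] at hx
        rw [hx.2]; ring
      rw [Finset.sum_congr rfl h3, ← Finset.mul_sum, ← marg1_coclust' p CX CW xs]
      by_cases h : marg₁ (coclust p CX CW) xs = 0
      · have hle : coclust p CX CW (xs, CW w) ≤ marg₁ (coclust p CX CW) xs :=
          Finset.single_le_sum (f := fun ws => coclust p CX CW (xs, ws))
            (fun i _ => coclust_nonneg' p hpn CX CW (xs, i)) (Finset.mem_univ (CW w))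
        have hc : coclust p CX CW (xs, CW w) = 0 := by
          have := coclust_nonneg' p hpn CX CW (xs, CW w); linarith
        simp [h, hc]
      · field_simp
    rw [h2, div_mul_cancel₀ _ (hM2pos w).ne']
  refine ⟨hrow, hcol, ?_⟩
  rw [Fintype.sum_prod_type]
  rw [Finset.sum_congr rfl fun x _ => hrow x]
  rw [← hsum, Fintype.sum_prod_type]
  rfl
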